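/- arXiv:1709.01919 — 2 statements merged into one kernel-verified Lean document; each statement's English description precedes it below -/
import Mathlib

section
/- Let μ > 0 and let f : (ℝ^{p×p})^K → ℝ be a differentiable function on K-tuples of p × p real matrices (equipped with the inner product ⟨Θ, Θ'⟩ = Σ_{k=1}^K tr(Θ_kᵀ Θ'_k) and the induced norm ‖Θ‖ with ‖Θ‖² = Σ_k ‖Θ_k‖_F²) that is μ-strongly convex: f(Θ') ≥ f(Θ) + ⟨∇f(Θ), Θ' − Θ⟩ + (μ/2)‖Θ' − Θ‖² for all Θ, Θ'. Let Θ̂ = (Θ̂_1, …, Θ̂_K) be a global minimizer of f, let Θ* = (Θ*_1, …, Θ*_K) satisfy rank(Θ*_k) ≤ 1 for every k, and for each k let R_k be a best rank-one approximation of Θ̂_k in Frobenius norm (rank(R_k) ≤ 1 and ‖R_k − Θ̂_k‖_F ≤ ‖S − Θ̂_k‖_F for all S with rank(S) ≤ 1). Then for every k, ‖R_k − Θ*_k‖_F ≤ (4/μ)·‖∇f(Θ*)‖. -/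
open Matrix
/-- Frobenius norm of a real matrix. -/
noncomputable def frobNorm {p : ℕ} (A : Matrix (Fin p) (Fin p) ℝ) : ℝ :=
  Real.sqrt (∑ i, ∑ j, (A i j) ^ 2)

/-- Trace inner product on `K`-tuples of `p × p` matrices:
`⟨Θ, Θ'⟩ = Σ_k tr(Θ_kᵀ Θ'_k)`. -/
noncomputable def tupInner {p K : ℕ} (Θ Θ' : Fin K → Matrix (Fin p) (Fin p) ℝ) : ℝ :=
  ∑ k, ((Θ k)ᵀ * Θ' k).trace

/-- The norm induced by the trace inner product, `‖Θ‖² = Σ_k ‖Θ_k‖_F²`. -/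
noncomputable def tupNorm {p K : ℕ} (Θ : Fin K → Matrix (Fin p) (Fin p) ℝ) : ℝ :=
  Real.sqrt (tupInner Θ Θ)

lemma tupInner_eq_sum {p K : ℕ} (X Y : Fin K → Matrix (Fin p) (Fin p) ℝ) :
    tupInner X Y = ∑ k, ∑ i, ∑ j, X k j i * Y k j i := by
  unfold tupInner
  simp [Matrix.trace, Matrix.mul_apply, Matrix.diag, Matrix.transpose_apply]

lemma tupInner_self_nonneg {p K : ℕ} (X : Fin K → Matrix (Fin p) (Fin p) ℝ) :
    0 ≤ tupInner X X := by
  rw [tupInner_eq_sum]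
  apply Finset.sum_nonneg; intro k _; apply Finset.sum_nonneg; intro i _; apply Finset.sum_nonneg; intro j _; exact mul_self_nonneg _

lemma tupInner_expand {p K : ℕ} (t : ℝ) (g d : Fin K → Matrix (Fin p) (Fin p) ℝ) :
    tupInner (t • g + d) (t • g + d)
      = t ^ 2 * tupInner g g + 2 * t * tupInner g d + tupInner d d := by
  simp only [tupInner_eq_sum, Finset.mul_sum, ← Finset.sum_add_distrib]
  refine Finset.sum_congr rfl fun k _ => Finset.sum_congr rfl fun i _ =>
    Finset.sum_congr rfl fun j _ => ?_
  simp only [Pi.add_apply, Pi.smul_apply, Matrix.add_apply, Matrix.smul_apply, smul_eq_mul]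
  ring

lemma tupNorm_sq {p K : ℕ} (X : Fin K → Matrix (Fin p) (Fin p) ℝ) :
    tupNorm X ^ 2 = tupInner X X := Real.sq_sqrt (tupInner_self_nonneg X)

lemma frobNorm_le_tupNorm {p K : ℕ} (X : Fin K → Matrix (Fin p) (Fin p) ℝ) (k : Fin K) :
    frobNorm (X k) ≤ tupNorm X := by
  unfold frobNorm tupNorm
  apply Real.sqrt_le_sqrt
  rw [tupInner_eq_sum]
  have h : ∑ i, ∑ j, (X k i j) ^ 2 = ∑ i, ∑ j, X k j i * X k j i := by
    rw [Finset.sum_comm]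
    simp [pow_two]
  rw [h]
  exact Finset.single_le_sum (f := fun m => ∑ i, ∑ j, X m j i * X m j i)
    (fun m _ => Finset.sum_nonneg fun i _ => Finset.sum_nonneg fun j _ => mul_self_nonneg _)
    (Finset.mem_univ k)

lemma frobNorm_eq_norm {p : ℕ} (A : Matrix (Fin p) (Fin p) ℝ) :
    frobNorm A
      = ‖((WithLp.equiv 2 ((Fin p × Fin p) → ℝ)).symm fun ij => A ij.1 ij.2)‖ := by
  rw [EuclideanSpace.norm_eq]
  simp [frobNorm, Fintype.sum_prod_type, Real.norm_eq_abs, sq_abs]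

lemma frobNorm_triangle {p : ℕ} (A B C : Matrix (Fin p) (Fin p) ℝ) :
    frobNorm (A - C) ≤ frobNorm (A - B) + frobNorm (B - C) := by
  rw [frobNorm_eq_norm, frobNorm_eq_norm, frobNorm_eq_norm]
  have e1 : ((WithLp.equiv 2 ((Fin p × Fin p) → ℝ)).symm fun ij => (A - C) ij.1 ij.2)
      = ((WithLp.equiv 2 ((Fin p × Fin p) → ℝ)).symm fun ij => A ij.1 ij.2)
        - ((WithLp.equiv 2 ((Fin p × Fin p) → ℝ)).symm fun ij => C ij.1 ij.2) := rfl
  have e2 : ((WithLp.equiv 2 ((Fin p × Fin p) → ℝ)).symm fun ij => (A - B) ij.1 ij.2)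
      = ((WithLp.equiv 2 ((Fin p × Fin p) → ℝ)).symm fun ij => A ij.1 ij.2)
        - ((WithLp.equiv 2 ((Fin p × Fin p) → ℝ)).symm fun ij => B ij.1 ij.2) := rfl
  have e3 : ((WithLp.equiv 2 ((Fin p × Fin p) → ℝ)).symm fun ij => (B - C) ij.1 ij.2)
      = ((WithLp.equiv 2 ((Fin p × Fin p) → ℝ)).symm fun ij => B ij.1 ij.2)
        - ((WithLp.equiv 2 ((Fin p × Fin p) → ℝ)).symm fun ij => C ij.1 ij.2) := rfl
  rw [e1, e2, e3]
  exact norm_sub_le_norm_sub_add_norm_sub _ _ _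

lemma frobNorm_sub_comm {p : ℕ} (A B : Matrix (Fin p) (Fin p) ℝ) :
    frobNorm (A - B) = frobNorm (B - A) := by
  unfold frobNorm
  congr 1
  refine Finset.sum_congr rfl fun i _ => Finset.sum_congr rfl fun j _ => ?_
  simp [Matrix.sub_apply]
  ring

/-- If `f` is `μ`-strongly convex on `K`-tuples of matrices (with gradient `gradf` with respect
to the trace inner product), `Θhat` is a global minimizer of `f`, each `Θstar_k` has rank at
most one, and each `R k` is a best rank-one approximation of `Θhat k` in Frobenius norm, then
`‖R_k − Θstar_k‖_F ≤ (4/μ)·‖∇f(Θstar)‖` for every `k`. -/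
theorem stmt_2 {p K : ℕ}
    (μ : ℝ) (hμ : 0 < μ)
    (f : (Fin K → Matrix (Fin p) (Fin p) ℝ) → ℝ)
    (gradf : (Fin K → Matrix (Fin p) (Fin p) ℝ) → (Fin K → Matrix (Fin p) (Fin p) ℝ))
    (hsc : ∀ Θ Θ' : Fin K → Matrix (Fin p) (Fin p) ℝ,
      f Θ' ≥ f Θ + tupInner (gradf Θ) (Θ' - Θ) + μ / 2 * tupNorm (Θ' - Θ) ^ 2)
    (Θhat : Fin K → Matrix (Fin p) (Fin p) ℝ)
    (hmin : ∀ Θ, f Θhat ≤ f Θ)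
    (Θstar : Fin K → Matrix (Fin p) (Fin p) ℝ)
    (hstar : ∀ k, (Θstar k).rank ≤ 1)
    (R : Fin K → Matrix (Fin p) (Fin p) ℝ)
    (hRrank : ∀ k, (R k).rank ≤ 1)
    (hbest : ∀ k, ∀ S : Matrix (Fin p) (Fin p) ℝ, S.rank ≤ 1 →
      frobNorm (R k - Θhat k) ≤ frobNorm (S - Θhat k)) :
    ∀ k, frobNorm (R k - Θstar k) ≤ 4 / μ * tupNorm (gradf Θstar) := by
  intro k
  set g := gradf Θstar with hg
  set d := Θhat - Θstar with hd
  have hC : tupNorm d ^ 2 = tupInner d d := tupNorm_sq d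
  have h1 : tupInner g d + μ / 2 * tupNorm d ^ 2 ≤ 0 := by
    have h := hsc Θstar Θhat
    have h2 := hmin Θstar
    rw [← hd] at h
    linarith
  have hpos : 0 ≤ tupInner ((2 / μ) • g + d) ((2 / μ) • g + d) := tupInner_self_nonneg _
  rw [tupInner_expand] at hpos
  have hBle : tupInner g d ≤ -(μ / 2) * tupInner d d := by
    rw [← hC]; linarith
  have hmul : 2 * (2 / μ) * tupInner g d ≤ 2 * (2 / μ) * (-(μ / 2) * tupInner d d) :=
    mul_le_mul_of_nonneg_left hBle (by positivity)
  have hsimp : 2 * (2 / μ) * (-(μ / 2) * tupInner d d) = -2 * tupInner d d := by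
    field_simp
  have hB : tupInner d d ≤ (2 / μ) ^ 2 * tupInner g g := by
    rw [hsimp] at hmul
    linarith
  have hdle : tupNorm d ≤ 2 / μ * tupNorm g := by
    unfold tupNorm
    calc Real.sqrt (tupInner d d) ≤ Real.sqrt ((2 / μ) ^ 2 * tupInner g g) :=
          Real.sqrt_le_sqrt hB
      _ = 2 / μ * Real.sqrt (tupInner g g) := by
          rw [Real.sqrt_mul (sq_nonneg _), Real.sqrt_sq (by positivity : (0:ℝ) ≤ 2 / μ)]
  have hfk : frobNorm (Θhat k - Θstar k) ≤ tupNorm d := by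
    have := frobNorm_le_tupNorm d k
    simpa [hd, Pi.sub_apply] using this
  have hRhat : frobNorm (R k - Θhat k) ≤ frobNorm (Θhat k - Θstar k) := by
    have h := hbest k (Θstar k) (hstar k)
    rwa [frobNorm_sub_comm (Θstar k)] at h
  calc frobNorm (R k - Θstar k)
      ≤ frobNorm (R k - Θhat k) + frobNorm (Θhat k - Θstar k) := frobNorm_triangle _ _ _
    _ ≤ 2 * frobNorm (Θhat k - Θstar k) := by linarith
    _ ≤ 2 * tupNorm d := by linarith
    _ ≤ 2 * (2 / μ * tupNorm g) := by linarith
    _ = 4 / μ * tupNorm g := by ring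
end

section
/- Let E be a finite-dimensional real inner product space, let 0 < μ ≤ L, and let f : E → ℝ be differentiable, μ-strongly convex (f(y) ≥ f(x) + ⟨∇f(x), y − x⟩ + (μ/2)‖y − x‖² for all x, y), and L-smooth (‖∇f(x) − ∇f(y)‖ ≤ L‖x − y‖ for all x, y). Then for all x, y ∈ E: ⟨∇f(x) − ∇f(y), x − y⟩ ≥ (μL/(μ + L))·‖x − y‖² + (1/(μ + L))·‖∇f(x) − ∇f(y)‖². -/
open scoped RealInnerProductSpace

private lemma descent_lemma
    {E : Type*} [NormedAddCommGroup E] [InnerProductSpace ℝ E] [FiniteDimensional ℝ E]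
    {f : E → ℝ} {L : ℝ} (hL : 0 ≤ L) (hdiff : ∀ x, DifferentiableAt ℝ f x)
    (hsmooth : ∀ x y : E, ‖gradient f x - gradient f y‖ ≤ L * ‖x - y‖) :
    ∀ x y : E, f y ≤ f x + ⟪gradient f x, y - x⟫ + L / 2 * ‖y - x‖ ^ 2 := by
  intro x y
  have hD : Differentiable ℝ f := hdiff
  have hfc : Continuous f := hD.continuous
  set v := y - x with hv
  set c1 : ℝ := ⟪gradient f x, v⟫ with hc1
  set c2 : ℝ := L * ‖v‖ ^ 2 / 2 with hc2
  set φ : ℝ → ℝ := fun t => f (x + t • v) - t * c1 - c2 * t ^ 2 with hφ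
  have hline : ∀ t : ℝ, HasDerivAt (fun t : ℝ => f (x + t • v))
      ⟪gradient f (x + t • v), v⟫ t := by
    intro t
    have h1 : HasDerivAt (fun t : ℝ => x + t • v) v t := by
      simpa using ((hasDerivAt_id t).smul_const v).const_add x
    have h2 := ((hdiff (x + t • v)).hasGradientAt.hasFDerivAt).comp_hasDerivAt t h1
    simpa [InnerProductSpace.toDual_apply_apply, Function.comp_def] using h2
  have hderiv : ∀ t : ℝ, HasDerivAt φ
      (⟪gradient f (x + t • v), v⟫ - c1 - c2 * (2 * t)) t := by
    intro t
    have h3 : HasDerivAt (fun t : ℝ => t * c1) c1 t := hasDerivAt_mul_const c1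
    have h4 : HasDerivAt (fun t : ℝ => c2 * t ^ 2) (c2 * (2 * t)) t := by
      simpa [mul_comm] using ((hasDerivAt_pow 2 t).const_mul c2)
    exact ((hline t).sub h3).sub h4
  have hmono : AntitoneOn φ (Set.Icc (0:ℝ) 1) := by
    apply antitoneOn_of_deriv_nonpos (convex_Icc 0 1)
    · exact (((hfc.comp (by continuity)).sub (continuous_id.mul continuous_const)).sub
        (continuous_const.mul (continuous_pow 2))).continuousOn
    · exact fun t _ => (hderiv t).differentiableAt.differentiableWithinAt
    · intro t ht
      rw [interior_Icc] at ht
      rw [(hderiv t).deriv]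
      have hb1 : ⟪gradient f (x + t • v), v⟫ - c1 ≤ ‖gradient f (x + t • v) - gradient f x‖ * ‖v‖ := by
        rw [hc1, ← inner_sub_left]
        exact real_inner_le_norm _ _
      have hb2 : ‖gradient f (x + t • v) - gradient f x‖ ≤ L * (t * ‖v‖) := by
        have := hsmooth (x + t • v) x
        simpa [norm_smul, abs_of_pos ht.1, mul_assoc] using this
      have hv0 : (0:ℝ) ≤ ‖v‖ := norm_nonneg _
      nlinarith [ht.1.le]
  have key : φ 1 ≤ φ 0 := hmono (Set.left_mem_Icc.2 zero_le_one)
    (Set.right_mem_Icc.2 zero_le_one) zero_le_one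
  have h0 : φ 0 = f x := by simp [hφ]
  have h1 : φ 1 = f y - c1 - c2 := by simp [hφ, hv]
  rw [h0, h1] at key
  rw [hc1, hc2] at key
  linarith

private lemma cocoercive
    {E : Type*} [NormedAddCommGroup E] [InnerProductSpace ℝ E]
    {F : E → ℝ} {G : E → E} {c : ℝ} (hc : 0 < c)
    (hcvx : ∀ x y : E, F x + ⟪G x, y - x⟫ ≤ F y)
    (hdesc : ∀ x y : E, F y ≤ F x + ⟪G x, y - x⟫ + c / 2 * ‖y - x‖ ^ 2) :
    ∀ x y : E, (1 / c) * ‖G x - G y‖ ^ 2 ≤ ⟪G x - G y, x - y⟫ := by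
  have main : ∀ x y : E, F y + ⟪G y, x - y⟫ + 1 / (2 * c) * ‖G x - G y‖ ^ 2 ≤ F x := by
    intro x y
    set g := G x - G y with hg
    set z := x - c⁻¹ • g with hz
    have h1 := hcvx y z
    have h2 := hdesc x z
    have e1 : z - x = -(c⁻¹ • g) := by rw [hz]; abel
    have e2 : z - y = (x - y) + (z - x) := by abel
    have e3 : ⟪G y, z - y⟫ = ⟪G y, x - y⟫ + ⟪G y, z - x⟫ := by
      rw [e2, inner_add_right]
    have e4 : ⟪G x, z - x⟫ - ⟪G y, z - x⟫ = ⟪g, z - x⟫ := by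
      rw [hg, inner_sub_left]
    have e5 : ⟪g, z - x⟫ = -(c⁻¹ * ‖g‖ ^ 2) := by
      rw [e1, inner_neg_right, real_inner_smul_right, real_inner_self_eq_norm_sq]
    have e6 : ‖z - x‖ ^ 2 = c⁻¹ ^ 2 * ‖g‖ ^ 2 := by
      rw [e1, norm_neg, norm_smul, mul_pow]
      simp [abs_of_pos (inv_pos.2 hc)]
    have hfield : c / 2 * (c⁻¹ ^ 2 * ‖g‖ ^ 2) - c⁻¹ * ‖g‖ ^ 2 = -(1 / (2 * c) * ‖g‖ ^ 2) := by
      field_simp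
      ring
    nlinarith [h1, h2]
  intro x y
  have hxy := main x y
  have hyx := main y x
  have hsymm : ‖G y - G x‖ = ‖G x - G y‖ := norm_sub_rev _ _
  have e7 : ⟪G y, x - y⟫ + ⟪G x, y - x⟫ = -⟪G x - G y, x - y⟫ := by
    have : y - x = -(x - y) := by abel
    rw [this, inner_neg_right, inner_sub_left]
    ring
  rw [hsymm] at hyx
  have hcc : 1 / (2 * c) + 1 / (2 * c) = 1 / c := by
    rw [← two_mul, one_div, mul_inv, ← mul_assoc, mul_inv_cancel₀ two_ne_zero, one_mul,
      one_div]
  nlinarith [hxy, hyx]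

/-- Co-coercivity: if `f` is differentiable, `μ`-strongly convex and `L`-smooth on a
finite-dimensional real inner product space, then
`⟨∇f(x) − ∇f(y), x − y⟩ ≥ (μL/(μ+L))‖x−y‖² + (1/(μ+L))‖∇f(x) − ∇f(y)‖²`. -/
theorem stmt_3
    {E : Type*} [NormedAddCommGroup E] [InnerProductSpace ℝ E] [FiniteDimensional ℝ E]
    (μ L : ℝ) (hμ : 0 < μ) (hμL : μ ≤ L)
    (f : E → ℝ) (hdiff : ∀ x, DifferentiableAt ℝ f x)
    (hsc : ∀ x y : E, f y ≥ f x + ⟪gradient f x, y - x⟫ + μ / 2 * ‖y - x‖ ^ 2)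
    (hsmooth : ∀ x y : E, ‖gradient f x - gradient f y‖ ≤ L * ‖x - y‖) :
    ∀ x y : E, ⟪gradient f x - gradient f y, x - y⟫ ≥
      μ * L / (μ + L) * ‖x - y‖ ^ 2 + 1 / (μ + L) * ‖gradient f x - gradient f y‖ ^ 2 := by
  intro x y
  set g := gradient f x - gradient f y with hg
  set d := x - y with hd
  have hpos : 0 < μ + L := by linarith
  have hmain : ‖g‖ ^ 2 + μ * L * ‖d‖ ^ 2 ≤ (μ + L) * ⟪g, d⟫ := by
    rcases eq_or_lt_of_le hμL with heq | hlt
    · -- μ = L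
      subst heq
      have hs : ‖g‖ ≤ μ * ‖d‖ := hsmooth x y
      have hmono : μ * ‖d‖ ^ 2 ≤ ⟪g, d⟫ := by
        rw [hg, hd, inner_sub_left]
        have h1 := hsc x y
        have h2 := hsc y x
        have e : ⟪gradient f x, y - x⟫ = -⟪gradient f x, x - y⟫ := by
          rw [← inner_neg_right]; congr 1; abel
        have hrev : ‖y - x‖ = ‖x - y‖ := norm_sub_rev _ _
        rw [e, hrev] at h1
        linarith
      have hgn : (0:ℝ) ≤ ‖g‖ := norm_nonneg _
      have hdn : (0:ℝ) ≤ ‖d‖ := norm_nonneg _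
      nlinarith
    · -- μ < L
      set c := L - μ with hc
      have hcpos : 0 < c := by linarith
      set F : E → ℝ := fun z => f z - μ / 2 * ‖z‖ ^ 2 with hF
      set G : E → E := fun z => gradient f z - μ • z with hG
      have hid : ∀ a b : E, ⟪G a, b - a⟫ = ⟪gradient f a, b - a⟫ - μ * ⟪a, b - a⟫ := by
        intro a b
        rw [hG]
        simp only
        rw [inner_sub_left, real_inner_smul_left]
      have hnorm : ∀ a b : E, μ / 2 * ‖b - a‖ ^ 2
          = μ / 2 * ‖b‖ ^ 2 - μ / 2 * ‖a‖ ^ 2 - μ * ⟪a, b - a⟫ := by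
        intro a b
        rw [inner_sub_right, real_inner_self_eq_norm_sq, norm_sub_sq_real, real_inner_comm]
        ring
      have hcvx : ∀ a b : E, F a + ⟪G a, b - a⟫ ≤ F b := by
        intro a b
        have := hsc a b
        rw [hF, hid]
        simp only
        rw [hnorm a b] at this
        linarith
      have hdesc : ∀ a b : E, F b ≤ F a + ⟪G a, b - a⟫ + c / 2 * ‖b - a‖ ^ 2 := by
        intro a b
        have := descent_lemma (le_trans hμ.le hμL) hdiff hsmooth a b
        rw [hF, hid]
        simp only
        have hn := hnorm a b
        have hcr : c / 2 * ‖b - a‖ ^ 2 = L / 2 * ‖b - a‖ ^ 2 - μ / 2 * ‖b - a‖ ^ 2 := by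
          rw [hc]; ring
        rw [hcr, hn]
        linarith
      have co := cocoercive hcpos hcvx hdesc x y
      have eG : G x - G y = g - μ • d := by
        rw [hG, hg, hd]
        simp only
        rw [smul_sub]
        abel
      rw [eG] at co
      have e1 : ⟪g - μ • d, d⟫ = ⟪g, d⟫ - μ * ‖d‖ ^ 2 := by
        rw [inner_sub_left, real_inner_smul_left, real_inner_self_eq_norm_sq]
      have e2 : ‖g - μ • d‖ ^ 2 = ‖g‖ ^ 2 - 2 * μ * ⟪g, d⟫ + μ ^ 2 * ‖d‖ ^ 2 := by
        rw [norm_sub_sq_real, real_inner_smul_right, norm_smul, mul_pow]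
        simp [abs_of_pos hμ]
        ring
      rw [e1, e2] at co
      rw [div_mul_eq_mul_div, div_le_iff₀ hcpos] at co
      · nlinarith
  rw [ge_iff_le]
  have e : μ * L / (μ + L) * ‖d‖ ^ 2 + 1 / (μ + L) * ‖g‖ ^ 2
      = (‖g‖ ^ 2 + μ * L * ‖d‖ ^ 2) / (μ + L) := by ring
  rw [e, div_le_iff₀ hpos]
  linarith [hmain]
end
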